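/- arXiv:2503.14794 — 2 statements merged into one kernel-verified Lean document; each statement's English description precedes it below -/
import Mathlib

section
/- Let v, v′ ∈ (ℤ≥0)ⁿ₊. If v is ℤ-triangular and |v′| < |v|, then it is not the case that p_ℤ(v′) ≤ p_ℤ(v) in the dominance order. -/
open Finset

/-- A partition of `N`: an antitone function `ℕ → ℕ` (the 0-indexed parts, padded with
zeros) supported on `{0, …, N-1}` whose parts sum to `N`. -/
def IsPartition (N : ℕ) (p : ℕ → ℕ) : Prop :=
  Antitone p ∧ (∀ i, N ≤ i → p i = 0) ∧ ∑ i ∈ Finset.range N, p i = N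

/-- Dominance order: `Dominates p q` means `q ≤ p`, i.e. every partial sum of the parts
of `q` is at most the corresponding partial sum of the parts of `p`. -/
def Dominates (p q : ℕ → ℕ) : Prop :=
  ∀ j, ∑ i ∈ Finset.range j, q i ≤ ∑ i ∈ Finset.range j, p i

/-- Multiplicity of the value `k` among the first `N` parts of `p`. -/
def mult (N : ℕ) (p : ℕ → ℕ) (k : ℕ) : ℕ :=
  ((Finset.range N).filter (fun i => p i = k)).card

/-- Multiplicity of the value `k` among the entries of a tuple of naturals. -/
def multN {n : ℕ} (v : Fin n → ℕ) (k : ℕ) : ℕ :=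
  (Finset.univ.filter (fun i => v i = k)).card

/-- Euclidean norm of a tuple of naturals. -/
noncomputable def enormN {n : ℕ} (v : Fin n → ℕ) : ℝ :=
  Real.sqrt (∑ i, ((v i : ℝ)) ^ 2)

/-- `IsPStar n p μ₀ μ` says that `p ∈ 𝒫*(2n)` with decomposition data `(μ₀; μ₁, μ₂, …)`:
`p` is a partition of `2n` whose multiset of parts is the union of the doubled partition
`[μ₁, μ₁, μ₂, μ₂, …]` and a single even part `2μ₀` (omitted if `μ₀ = 0`).  Equivalently,
for each `k ≥ 1` the multiplicity of `k` in `p` equals twice its multiplicity in `μ`, plus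
one if `k = 2μ₀`. -/
def IsPStar (n : ℕ) (p : ℕ → ℕ) (μ₀ : ℕ) (μ : ℕ → ℕ) : Prop :=
  IsPartition (2 * n) p ∧ Antitone μ ∧ (∀ i, n ≤ i → μ i = 0) ∧
  ∀ k, 1 ≤ k → mult (2 * n) p k = 2 * mult n μ k + (if k = 2 * μ₀ then 1 else 0)

/-- `IsVZ n μ₀ μ w` says that the weakly decreasing tuple `w : Fin n → ℕ` is `v_ℤ(p)` for
`p ∈ 𝒫*(2n)` with decomposition data `(μ₀; μ₁, μ₂, …)`: it has `μ₀` entries equal to `0`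
and `μ_k` entries equal to `k` for each `k ≥ 1`. -/
def IsVZ (n : ℕ) (μ₀ : ℕ) (μ : ℕ → ℕ) (w : Fin n → ℕ) : Prop :=
  Antitone w ∧ multN w 0 = μ₀ ∧ ∀ k, 1 ≤ k → multN w k = μ (k - 1)

/-- `IsPZ n v q` says that the partition `q` of `2n` is `p_ℤ(v)`: the weakly decreasing
rearrangement of `[2·m_v(0), m_v(1), m_v(1), m_v(2), m_v(2), …]`.  Equivalently, for each
positive value `c`, the multiplicity of `c` in `q` is twice the number of `k ≥ 1` with
`m_v(k) = c`, plus one if `c = 2·m_v(0)`. -/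
def IsPZ (n : ℕ) (v : Fin n → ℕ) (q : ℕ → ℕ) : Prop :=
  IsPartition (2 * n) q ∧
  ∀ c, 1 ≤ c → mult (2 * n) q c =
    2 * {k : ℕ | 1 ≤ k ∧ multN v k = c}.ncard + (if c = 2 * multN v 0 then 1 else 0)


/-- Downward closed predicates: card of filter over `range j` is a `min`. -/
lemma aux_downclosed (P : ℕ → Prop) [DecidablePred P] (N : ℕ)
    (hdc : ∀ i j, i ≤ j → P j → P i) (hsupp : ∀ i, P i → i < N) (j : ℕ) :
    ((Finset.range j).filter P).card = min j (((Finset.range N).filter P).card) := by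
  have key : ∀ i, P i ↔ i < ((Finset.range N).filter P).card := by
    intro i
    constructor
    · intro hi
      have hsub : Finset.range (i+1) ⊆ (Finset.range N).filter P := by
        intro x hx
        simp only [mem_range] at hx
        have hPx : P x := hdc x i (by omega) hi
        simp only [mem_filter, mem_range]
        exact ⟨hsupp x hPx, hPx⟩
      have := Finset.card_le_card hsub
      simp only [card_range] at this
      omega
    · intro hi
      by_contra hPi
      have hsub : (Finset.range N).filter P ⊆ Finset.range i := by
        intro x hx
        simp only [mem_filter, mem_range] at hx
        simp only [mem_range]
        by_contra hxi
        exact hPi (hdc i x (by omega) hx.2)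
      have := Finset.card_le_card hsub
      simp only [card_range] at this
      omega
  have h2 : (Finset.range j).filter P = Finset.range (min j (((Finset.range N).filter P).card)) := by
    ext x
    simp only [mem_filter, mem_range]
    rw [key x]
    omega
  rw [h2, card_range]

/-- Partition a filter count by the values of `f`. -/
lemma aux_fiber {α : Type*} [DecidableEq α] (s : Finset α) (f : α → ℕ) (c B : ℕ)
    (hB : ∀ i ∈ s, f i ≤ B) :
    (s.filter (fun i => c ≤ f i)).card
      = ∑ d ∈ Finset.Icc c B, (s.filter (fun i => f i = d)).card := by
  rw [Finset.card_eq_sum_card_fiberwise (f := f) (t := Finset.Icc c B)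
    (fun x hx => by
      simp only [Finset.mem_coe, mem_filter] at hx
      simp only [Finset.mem_coe, Finset.mem_Icc]
      exact ⟨hx.2, hB x hx.1⟩)]
  apply Finset.sum_congr rfl
  intro d hd
  rw [Finset.mem_Icc] at hd
  congr 1
  ext i
  simp only [mem_filter]
  constructor
  · rintro ⟨⟨hi, _⟩, hd'⟩; exact ⟨hi, hd'⟩
  · rintro ⟨hi, hd'⟩; exact ⟨⟨hi, by omega⟩, hd'⟩

/-- Double counting: a sum of values equals the sum of the column counts. -/
lemma aux_sum_eq_colsum {α : Type*} (s : Finset α) (f : α → ℕ) (B : ℕ)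
    (hB : ∀ i ∈ s, f i ≤ B) :
    ∑ i ∈ s, f i = ∑ c ∈ Finset.Icc 1 B, (s.filter (fun i => c ≤ f i)).card := by
  have h1 : ∀ i ∈ s, f i = ∑ c ∈ Finset.Icc 1 B, (if c ≤ f i then 1 else 0) := by
    intro i hi
    rw [← Finset.card_filter]
    have : (Finset.Icc 1 B).filter (fun c => c ≤ f i) = Finset.Icc 1 (f i) := by
      ext c
      simp only [mem_filter, Finset.mem_Icc]
      have := hB i hi
      omega
    rw [this, Nat.card_Icc]
    omega
  rw [Finset.sum_congr rfl h1, Finset.sum_comm]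
  apply Finset.sum_congr rfl
  intro c _
  rw [← Finset.card_filter]

/-- Shift between `Icc 1 m` and `range m`. -/
lemma aux_shift (P : ℕ → Prop) [DecidablePred P] (m : ℕ) :
    ((Finset.Icc 1 m).filter P).card
      = ((Finset.range m).filter (fun l => P (l+1))).card := by
  apply Finset.card_nbij' (fun l => l - 1) (fun l => l + 1)
  · intro a ha
    simp only [Finset.mem_coe, mem_filter, Finset.mem_Icc] at ha
    simp only [Finset.mem_coe, mem_filter, mem_range]
    refine ⟨by omega, ?_⟩
    rw [show a - 1 + 1 = a by omega]
    exact ha.2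
  · intro a ha
    simp only [Finset.mem_coe, mem_filter, mem_range] at ha
    simp only [Finset.mem_coe, mem_filter, Finset.mem_Icc]
    exact ⟨by omega, ha.2⟩
  · intro a ha
    simp only [Finset.mem_coe, mem_filter, Finset.mem_Icc] at ha
    beta_reduce
    omega
  · intro a _
    beta_reduce
    omega

lemma sq_sum (m : ℕ) : ∑ c ∈ Finset.range m, (2*c+1) = m^2 := by
  induction m with
  | zero => simp
  | succ m ih => rw [Finset.sum_range_succ, ih]; ring

/-- indicator sum -/
lemma sum_ind (M B : ℕ) (hMB : M ≤ B) :
    ∑ c ∈ Finset.Icc 1 B, (if c ≤ M then 1 else 0) = M := by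
  rw [← Finset.card_filter]
  have : (Finset.Icc 1 B).filter (fun c => c ≤ M) = Finset.Icc 1 M := by
    ext c; simp only [mem_filter, Finset.mem_Icc]; omega
  rw [this, Nat.card_Icc]
  omega

lemma multN_le {n : ℕ} (v : Fin n → ℕ) (d : ℕ) : multN v d ≤ n := by
  unfold multN
  exact (Finset.card_filter_le _ _).trans (by simp)

/-- Partial sums of a `p_ℤ(v)` partition, expressed through the multiplicity data of `v`. -/
lemma pz_partial_sum (n : ℕ) (v : Fin n → ℕ) (q : ℕ → ℕ) (hq : IsPZ n v q)
    (Bv : ℕ) (hBv : ∀ m, 1 ≤ m → 1 ≤ multN v m → m ≤ Bv) (j : ℕ) :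
    ∑ i ∈ Finset.range j, q i =
      ∑ c ∈ Finset.Icc 1 (2*n), min j
        (2 * ((Finset.Icc 1 Bv).filter (fun l => c ≤ multN v l)).card
          + (if c ≤ 2 * multN v 0 then 1 else 0)) := by
  obtain ⟨⟨hanti, hsupp, hsum⟩, hmult⟩ := hq
  have hqle : ∀ i, q i ≤ 2*n := by
    intro i
    rcases lt_or_ge i (2*n) with h | h
    · calc q i ≤ ∑ i' ∈ Finset.range (2*n), q i' :=
          Finset.single_le_sum (fun _ _ => Nat.zero_le _) (mem_range.2 h)
        _ = 2*n := hsum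
    · simp [hsupp i h]
  rw [aux_sum_eq_colsum (Finset.range j) q (2*n) (fun i _ => hqle i)]
  apply Finset.sum_congr rfl
  intro c hc
  rw [Finset.mem_Icc] at hc
  rw [aux_downclosed (fun i => c ≤ q i) (2*n)
      (fun i i' hii' h => le_trans h (hanti hii'))
      (fun i hi => by by_contra h; push_neg at h; have := hsupp i (by omega); omega) j]
  congr 1
  rw [aux_fiber (Finset.range (2*n)) q c (2*n) (fun i _ => hqle i)]
  have hA : ∀ d ∈ Finset.Icc c (2*n),
      ((Finset.range (2*n)).filter (fun i => q i = d)).card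
      = 2 * ((Finset.Icc 1 Bv).filter (fun l => multN v l = d)).card
          + (if d = 2 * multN v 0 then 1 else 0) := by
    intro d hd
    rw [Finset.mem_Icc] at hd
    have hd1 : 1 ≤ d := by omega
    have h1 := hmult d hd1
    unfold mult at h1
    rw [h1]
    congr 2
    have hset : {k : ℕ | 1 ≤ k ∧ multN v k = d}
        = ↑((Finset.Icc 1 Bv).filter (fun l => multN v l = d)) := by
      ext l
      simp only [Set.mem_setOf_eq, Finset.coe_filter, Finset.mem_Icc]
      constructor
      · rintro ⟨h1', h2⟩; exact ⟨⟨h1', hBv l h1' (by omega)⟩, h2⟩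
      · rintro ⟨⟨h1', _⟩, h2⟩; exact ⟨h1', h2⟩
    rw [hset, Set.ncard_coe_finset]
  rw [Finset.sum_congr rfl hA, Finset.sum_add_distrib, ← Finset.mul_sum]
  congr 1
  · congr 1
    rw [aux_fiber (Finset.Icc 1 Bv) (multN v) c (2*n)
      (fun l _ => (multN_le v l).trans (by omega))]
  · have hm0 : 2 * multN v 0 ≤ 2*n := by have := multN_le v 0; omega
    rw [Finset.sum_ite_eq' (Finset.Icc c (2*n)) (2 * multN v 0) (fun _ => 1)]
    simp only [Finset.mem_Icc]
    split_ifs with h1 h2 h3 <;> first | rfl | omega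

/-- The quantity `2·#{i : v i ≤ k}` expressed as a columnwise sum. -/
lemma target_sum (n : ℕ) (v : Fin n → ℕ) (k : ℕ) :
    2 * (Finset.univ.filter (fun i : Fin n => v i ≤ k)).card =
      ∑ c ∈ Finset.Icc 1 (2*n), ((if c ≤ 2 * multN v 0 then 1 else 0)
        + 2 * ((Finset.range k).filter (fun l => c ≤ multN v (l+1))).card) := by
  rw [Finset.sum_add_distrib]
  have h1 : ∑ c ∈ Finset.Icc 1 (2*n), (if c ≤ 2 * multN v 0 then 1 else 0)
      = 2 * multN v 0 := sum_ind _ _ (by have := multN_le v 0; omega)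
  have h2 : ∑ c ∈ Finset.Icc 1 (2*n),
        2 * ((Finset.range k).filter (fun l => c ≤ multN v (l+1))).card
      = 2 * ∑ l ∈ Finset.range k, multN v (l+1) := by
    rw [← Finset.mul_sum]
    congr 1
    rw [← aux_sum_eq_colsum (Finset.range k) (fun l => multN v (l+1)) (2*n)
      (fun l _ => (multN_le v (l+1)).trans (by omega))]
  rw [h1, h2]
  have h3 : (Finset.univ.filter (fun i : Fin n => v i ≤ k)).card
      = multN v 0 + ∑ l ∈ Finset.range k, multN v (l+1) := by
    rw [Finset.card_eq_sum_card_fiberwise (f := v) (t := Finset.range (k+1))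
      (fun i hi => by
        simp only [Finset.mem_coe, Finset.mem_filter] at hi
        simp only [Finset.mem_coe, Finset.mem_range]
        omega)]
    rw [Finset.sum_range_succ']
    have hf : ∀ d, d ≤ k →
        ((Finset.univ.filter (fun i : Fin n => v i ≤ k)).filter (fun i => v i = d)).card
          = multN v d := by
      intro d hd
      unfold multN
      congr 1
      ext i
      simp only [Finset.mem_filter, Finset.mem_univ, true_and]
      omega
    rw [hf 0 (by omega)]
    rw [Finset.sum_congr rfl (fun l hl => hf (l+1) (by
      simp only [Finset.mem_range] at hl; omega))]
    omega
  rw [h3]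
  omega

/-- Lower bound for the column of a general `v'`. -/
lemma perc_lower (n k c : ℕ) (hc : 1 ≤ c) (v' : Fin n → ℕ) (Bv' : ℕ)
    (hBv' : ∀ m, 1 ≤ m → 1 ≤ multN v' m → m ≤ Bv') :
    (if c ≤ 2 * multN v' 0 then 1 else 0)
      + 2 * ((Finset.range k).filter (fun l => c ≤ multN v' (l+1))).card
    ≤ min (2*k+1) (2 * ((Finset.Icc 1 Bv').filter (fun l => c ≤ multN v' l)).card
        + (if c ≤ 2 * multN v' 0 then 1 else 0)) := by
  have h1 : ((Finset.range k).filter (fun l => c ≤ multN v' (l+1))).card ≤ k :=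
    (Finset.card_filter_le _ _).trans (by simp)
  have h2 : ((Finset.range k).filter (fun l => c ≤ multN v' (l+1))).card
      ≤ ((Finset.Icc 1 Bv').filter (fun l => c ≤ multN v' l)).card := by
    apply Finset.card_le_card_of_injOn (fun l => l + 1)
    · intro l hl
      simp only [Finset.mem_coe, Finset.mem_filter, Finset.mem_range] at hl
      simp only [Finset.mem_coe, Finset.mem_filter, Finset.mem_Icc]
      exact ⟨⟨by omega, hBv' (l+1) (by omega) (by omega)⟩, hl.2⟩
    · intro a _ b _ h
      simpa using h
  split_ifs <;> omega

/-- Upper bound for the column of a triangular `v`. -/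
lemma perc_upper (n k c Bv : ℕ) (hc : 1 ≤ c) (v : Fin n → ℕ)
    (hBv : ∀ m, 1 ≤ m → 1 ≤ multN v m → m ≤ Bv)
    (hmanti : ∀ a b, 1 ≤ a → a ≤ b → multN v b ≤ multN v a)
    (htr : multN v 1 ≤ 2 * multN v 0) :
    min (2*k+1) (2 * ((Finset.Icc 1 Bv).filter (fun l => c ≤ multN v l)).card
        + (if c ≤ 2 * multN v 0 then 1 else 0))
    ≤ (if c ≤ 2 * multN v 0 then 1 else 0)
      + 2 * ((Finset.range k).filter (fun l => c ≤ multN v (l+1))).card := by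
  have hshift : ((Finset.Icc 1 Bv).filter (fun l => c ≤ multN v l)).card
      = ((Finset.range Bv).filter (fun l => c ≤ multN v (l+1))).card :=
    aux_shift _ _
  have he : ((Finset.range k).filter (fun l => c ≤ multN v (l+1))).card
      = min k (((Finset.range Bv).filter (fun l => c ≤ multN v (l+1))).card) := by
    apply aux_downclosed
    · intro i j hij hj
      exact le_trans hj (hmanti (i+1) (j+1) (by omega) (by omega))
    · intro i hi
      have := hBv (i+1) (by omega) (by omega)
      omega
  have hzero : ¬ (c ≤ 2 * multN v 0) →
      ((Finset.Icc 1 Bv).filter (fun l => c ≤ multN v l)).card = 0 := by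
    intro h
    rw [Finset.card_eq_zero]
    by_contra hne
    obtain ⟨l, hl⟩ := Finset.nonempty_of_ne_empty hne
    simp only [Finset.mem_filter, Finset.mem_Icc] at hl
    have := hmanti 1 l (by omega) hl.1.1
    omega
  split_ifs with h
  · omega
  · have := hzero h
    omega

lemma norm_expand (n B : ℕ) (w : Fin n → ℕ) (hB : ∀ i, w i ≤ B) :
    ∑ i, (w i)^2 = ∑ c ∈ Finset.range B,
      (2*c+1) * (Finset.univ.filter (fun i => c+1 ≤ w i)).card := by
  have h1 : ∀ i : Fin n, (w i)^2
      = ∑ c ∈ Finset.range B, (if c+1 ≤ w i then 2*c+1 else 0) := by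
    intro i
    rw [← Finset.sum_filter]
    have : (Finset.range B).filter (fun c => c+1 ≤ w i) = Finset.range (w i) := by
      ext c
      simp only [Finset.mem_filter, Finset.mem_range]
      have := hB i
      omega
    rw [this, sq_sum]
  rw [Finset.sum_congr rfl (fun i _ => h1 i), Finset.sum_comm]
  apply Finset.sum_congr rfl
  intro c _
  rw [← Finset.sum_filter, Finset.sum_const, smul_eq_mul, Nat.mul_comm]

/-- Let `v, v′ ∈ (ℤ≥0)ⁿ₊`.  If `v` is `ℤ`-triangular (i.e.
`v = v_ℤ(p)` for some `p ∈ 𝒫**(2n)`) and `|v′| < |v|`, then `p_ℤ(v′) ≰ p_ℤ(v)` in the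
dominance order. -/
theorem statement7 (n : ℕ) (hn : 1 ≤ n)
    (v v' : Fin n → ℕ) (hv : Antitone v) (hv' : Antitone v')
    (htri : ∃ (p : ℕ → ℕ) (μ₀ : ℕ) (μ : ℕ → ℕ),
      IsPStar n p μ₀ μ ∧ μ 0 ≤ 2 * μ₀ ∧ IsVZ n μ₀ μ v)
    (hlt : enormN v' < enormN v)
    (q q' : ℕ → ℕ) (hq : IsPZ n v q) (hq' : IsPZ n v' q') :
    ¬ Dominates q q' := by
  
  intro hdom
  obtain ⟨p, μ₀, μ, hpstar, hμtri, hvz⟩ := htri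
  obtain ⟨_, hm0, hmk⟩ := hvz
  obtain ⟨_, hμanti, hμsupp, _⟩ := hpstar
  have hn0 : 0 < n := hn
  have hBgen : ∀ (w : Fin n → ℕ), Antitone w →
      ∀ m, 1 ≤ m → 1 ≤ multN w m → m ≤ w ⟨0, hn0⟩ := by
    intro w hw m _ h
    have hpos : 0 < (Finset.univ.filter (fun i => w i = m)).card := h
    obtain ⟨i, hi⟩ := Finset.card_pos.mp hpos
    simp only [Finset.mem_filter, Finset.mem_univ, true_and] at hi
    have h0 : (⟨0, hn0⟩ : Fin n) ≤ i := by rw [Fin.le_def]; exact Nat.zero_le _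
    have := hw h0
    omega
  have hmanti : ∀ a b, 1 ≤ a → a ≤ b → multN v b ≤ multN v a := by
    intro a b ha hab
    rw [hmk a ha, hmk b (by omega)]
    exact hμanti (by omega : a - 1 ≤ b - 1)
  have htr : multN v 1 ≤ 2 * multN v 0 := by
    rw [hmk 1 le_rfl, hm0]
    exact hμtri
  have key : ∀ k, (Finset.univ.filter (fun i : Fin n => k+1 ≤ v i)).card
      ≤ (Finset.univ.filter (fun i : Fin n => k+1 ≤ v' i)).card := by
    intro k
    have e1 := pz_partial_sum n v q hq (v ⟨0,hn0⟩) (hBgen v hv) (2*k+1)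
    have e2 := pz_partial_sum n v' q' hq' (v' ⟨0,hn0⟩) (hBgen v' hv') (2*k+1)
    have hb : ∑ i ∈ Finset.range (2*k+1), q i
        ≤ 2 * (Finset.univ.filter (fun i : Fin n => v i ≤ k)).card := by
      rw [e1, target_sum n v k]
      apply Finset.sum_le_sum
      intro c hc
      rw [Finset.mem_Icc] at hc
      exact perc_upper n k c _ hc.1 v (hBgen v hv) hmanti htr
    have ha : 2 * (Finset.univ.filter (fun i : Fin n => v' i ≤ k)).card
        ≤ ∑ i ∈ Finset.range (2*k+1), q' i := by
      rw [e2, target_sum n v' k]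
      apply Finset.sum_le_sum
      intro c hc
      rw [Finset.mem_Icc] at hc
      exact perc_lower n k c hc.1 v' _ (hBgen v' hv')
    have hd := hdom (2*k+1)
    have hcmpl : ∀ (w : Fin n → ℕ),
        (Finset.univ.filter (fun i : Fin n => w i ≤ k)).card
          + (Finset.univ.filter (fun i : Fin n => k+1 ≤ w i)).card = n := by
      intro w
      have hneg : (Finset.univ.filter (fun i : Fin n => ¬ (w i ≤ k))).card
          = (Finset.univ.filter (fun i : Fin n => k+1 ≤ w i)).card := by
        congr 1
        ext i
        simp only [Finset.mem_filter, Finset.mem_univ, true_and]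
        omega
      have htot := Finset.card_filter_add_card_filter_not
        (s := (Finset.univ : Finset (Fin n))) (p := fun i => w i ≤ k)
      rw [Finset.card_univ, Fintype.card_fin] at htot
      omega
    have hcv := hcmpl v
    have hcv' := hcmpl v'
    omega
  have hvB : ∀ i, v i ≤ v ⟨0,hn0⟩ + v' ⟨0,hn0⟩ := by
    intro i
    have h0 : (⟨0, hn0⟩ : Fin n) ≤ i := by rw [Fin.le_def]; exact Nat.zero_le _
    have := hv h0
    omega
  have hv'B : ∀ i, v' i ≤ v ⟨0,hn0⟩ + v' ⟨0,hn0⟩ := by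
    intro i
    have h0 : (⟨0, hn0⟩ : Fin n) ≤ i := by rw [Fin.le_def]; exact Nat.zero_le _
    have := hv' h0
    omega
  have hsq : ∑ i, (v i)^2 ≤ ∑ i, (v' i)^2 := by
    rw [norm_expand n (v ⟨0,hn0⟩ + v' ⟨0,hn0⟩) v hvB,
        norm_expand n (v ⟨0,hn0⟩ + v' ⟨0,hn0⟩) v' hv'B]
    apply Finset.sum_le_sum
    intro c _
    exact Nat.mul_le_mul (le_refl _) (key c)
  have hle : enormN v ≤ enormN v' := by
    unfold enormN
    apply Real.sqrt_le_sqrt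
    have h1 : ((∑ i, (v i)^2 : ℕ) : ℝ) = ∑ i, ((v i : ℝ))^2 := by push_cast; ring
    have h2 : ((∑ i, (v' i)^2 : ℕ) : ℝ) = ∑ i, ((v' i : ℝ))^2 := by push_cast; ring
    rw [← h1, ← h2]
    exact_mod_cast hsq
  linarith
end

section
/- Let v, v′ ∈ (1/2+ℤ≥0)ⁿ₊. If v is (1/2)ℤ-triangular and |v′| < |v|, then it is not the case that p_{1/2}(v′) ≤ p_{1/2}(v) in the dominance order. -/
open Finset

/-- Multiplicity of the real value `s` among the entries of the tuple `v`. -/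
noncomputable def multR {n : ℕ} (v : Fin n → ℝ) (s : ℝ) : ℕ :=
  {i : Fin n | v i = s}.ncard

/-- Euclidean norm of a real tuple. -/
noncomputable def enormR {n : ℕ} (v : Fin n → ℝ) : ℝ :=
  Real.sqrt (∑ i, (v i) ^ 2)

/-- `IsVHalf n p w` says that the weakly decreasing tuple `w : Fin n → ℝ` is the tuple
having `ν_k = p (k-1)` entries equal to `(2k-1)/2` for each `k ≥ 1`, where
`p = [ν₁, ν₂, …]` is a partition of `n`. -/
def IsVHalf (n : ℕ) (p : ℕ → ℕ) (w : Fin n → ℝ) : Prop :=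
  Antitone w ∧ (∀ i, ∃ k : ℕ, 1 ≤ k ∧ w i = (2 * (k : ℝ) - 1) / 2) ∧
  ∀ k : ℕ, 1 ≤ k → multR w ((2 * (k : ℝ) - 1) / 2) = p (k - 1)

/-- `IsPHalf n v q` says that the partition `q` of `n` is the weakly decreasing
rearrangement of the multiplicity sequence `[m_v(1/2), m_v(3/2), m_v(5/2), …]`. -/
def IsPHalf (n : ℕ) (v : Fin n → ℝ) (q : ℕ → ℕ) : Prop :=
  IsPartition n q ∧
  ∀ c : ℕ, 1 ≤ c →
    mult n q c = {k : ℕ | 1 ≤ k ∧ multR v ((2 * (k : ℝ) - 1) / 2) = c}.ncard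

private lemma wval_inj : Function.Injective (fun j : ℕ => (2 * (j : ℝ) + 1) / 2) := by
  intro a b h
  simp only at h
  field_simp at h
  have h' : 2 * a + 1 = 2 * b + 1 := by exact_mod_cast h
  omega

private lemma wval_succ (j : ℕ) :
    (2 * ((j + 1 : ℕ) : ℝ) - 1) / 2 = (2 * (j : ℝ) + 1) / 2 := by
  push_cast; ring

private lemma multR_card {n : ℕ} (v : Fin n → ℝ) (s : ℝ) :
    multR v s = (Finset.univ.filter (fun i => v i = s)).card := by
  rw [multR, ← Set.ncard_coe_finset]
  congr 1
  ext i
  simp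

private lemma layer_cake (f : ℕ → ℕ) (j C : ℕ) (hf : ∀ i, i < j → f i ≤ C) :
    ∑ i ∈ range j, f i = ∑ c ∈ Icc 1 C, ((range j).filter (fun i => c ≤ f i)).card := by
  simp_rw [Finset.card_filter]
  rw [Finset.sum_comm]
  refine Finset.sum_congr rfl fun i hi => ?_
  have h1 : (Icc 1 C).filter (fun c => c ≤ f i) = Icc 1 (f i) := by
    ext c
    simp only [mem_filter, mem_Icc]
    have := hf i (mem_range.mp hi)
    omega
  calc f i = ((Icc 1 C).filter (fun c => c ≤ f i)).card := by rw [h1, Nat.card_Icc]; omega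
    _ = ∑ c ∈ Icc 1 C, if c ≤ f i then 1 else 0 := by rw [Finset.card_filter]

private lemma count_decomp (f : ℕ → ℕ) (s : Finset ℕ) (C c : ℕ) (hf : ∀ i ∈ s, f i ≤ C) :
    (s.filter (fun i => c ≤ f i)).card = ∑ d ∈ Icc c C, (s.filter (fun i => f i = d)).card := by
  simp_rw [Finset.card_filter]
  rw [Finset.sum_comm]
  refine Finset.sum_congr rfl fun i hi => ?_
  rw [Finset.sum_ite_eq (Icc c C) (f i) (fun _ => 1)]
  have := hf i hi
  by_cases h : c ≤ f i <;> simp [mem_Icc, h, this]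

private lemma filter_ge_eq (f : ℕ → ℕ) (hf : Antitone f) (N : ℕ)
    (hvan : ∀ i, N ≤ i → f i = 0) (c : ℕ) (hc : 1 ≤ c) (j : ℕ) :
    (range j).filter (fun i => c ≤ f i)
      = range (min j (((range N).filter (fun i => c ≤ f i)).card)) := by
  set Nc := ((range N).filter (fun i => c ≤ f i)).card with hNc
  have char : ∀ i, c ≤ f i ↔ i < Nc := by
    intro i
    constructor
    · intro h
      have hiN : i < N := by
        by_contra hiN
        rw [hvan i (by omega)] at h; omega
      have hsub : range (i + 1) ⊆ (range N).filter (fun i => c ≤ f i) := by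
        intro x hx
        rw [mem_range] at hx
        rw [mem_filter, mem_range]
        exact ⟨by omega, le_trans h (hf (by omega))⟩
      have := Finset.card_le_card hsub
      rw [card_range] at this
      omega
    · intro h
      by_contra hcon
      have hsub : (range N).filter (fun i => c ≤ f i) ⊆ range i := by
        intro x hx
        rw [mem_filter, mem_range] at hx
        rw [mem_range]
        by_contra hxi
        exact hcon (le_trans hx.2 (hf (by omega)))
      have := Finset.card_le_card hsub
      rw [card_range] at this
      omega
  ext i
  simp only [mem_filter, mem_range, char, lt_min_iff]

private lemma abel_le (M : ℕ) (b f g : ℕ → ℝ)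
    (hb : ∀ i, i + 1 < M → b i ≤ b (i + 1))
    (hfg : ∀ j, j ≤ M → ∑ i ∈ range j, g i ≤ ∑ i ∈ range j, f i)
    (heq : ∑ i ∈ range M, f i = ∑ i ∈ range M, g i) :
    ∑ i ∈ range M, f i * b i ≤ ∑ i ∈ range M, g i * b i := by
  have key : ∑ i ∈ range M, b i * (f i - g i) ≤ 0 := by
    have h := Finset.sum_range_by_parts b (fun i => f i - g i) M
    simp only [smul_eq_mul] at h
    rw [h]
    have h1 : ∑ i ∈ range M, (f i - g i) = 0 := by
      rw [Finset.sum_sub_distrib, heq, sub_self]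
    rw [h1, mul_zero, zero_sub, neg_nonpos]
    apply Finset.sum_nonneg
    intro i hi
    rw [mem_range] at hi
    have h2 : 0 ≤ b (i + 1) - b i := sub_nonneg.mpr (hb i (by omega))
    have h3 : 0 ≤ ∑ k ∈ range (i + 1), (f k - g k) := by
      rw [Finset.sum_sub_distrib, sub_nonneg]
      exact hfg (i + 1) (by omega)
    exact mul_nonneg h2 h3
  have expand : ∑ i ∈ range M, f i * b i - ∑ i ∈ range M, g i * b i
      = ∑ i ∈ range M, b i * (f i - g i) := by
    rw [← Finset.sum_sub_distrib]
    exact Finset.sum_congr rfl fun i _ => by ring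
  linarith

def Covers {n : ℕ} (M : ℕ) (v : Fin n → ℝ) : Prop :=
  ∀ i, ∃ j, j < M ∧ v i = (2 * (j : ℝ) + 1) / 2

noncomputable def mhalf {n : ℕ} (v : Fin n → ℝ) (j : ℕ) : ℕ :=
  multR v ((2 * (j : ℝ) + 1) / 2)

private lemma exists_cover {n : ℕ} (v : Fin n → ℝ)
    (hvmem : ∀ i, ∃ k : ℕ, 1 ≤ k ∧ v i = (2 * (k : ℝ) - 1) / 2) :
    ∃ M, Covers M v := by
  choose kv h1 h2 using hvmem
  refine ⟨univ.sup kv, fun i => ⟨kv i - 1, ?_, ?_⟩⟩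
  · have ha := Finset.le_sup (f := kv) (mem_univ i)
    have hb := h1 i
    omega
  · rw [← wval_succ, (by have := h1 i; omega : kv i - 1 + 1 = kv i)]
    exact h2 i

private lemma covers_mono {n : ℕ} {v : Fin n → ℝ} {M M' : ℕ} (h : M ≤ M')
    (hcov : Covers M v) : Covers M' v := fun i => by
  obtain ⟨j, hj, he⟩ := hcov i
  exact ⟨j, by omega, he⟩

private lemma mhalf_le {n : ℕ} (v : Fin n → ℝ) (k : ℕ) : mhalf v k ≤ n := by
  have h : mhalf v k = (Finset.univ.filter (fun i => v i = (2 * (k : ℝ) + 1) / 2)).card :=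
    multR_card v _
  rw [h]
  exact le_trans (Finset.card_filter_le _ _) (by simp)

private lemma mhalf_vanish {n : ℕ} {v : Fin n → ℝ} {M : ℕ} (hcov : Covers M v)
    {j : ℕ} (hj : M ≤ j) : mhalf v j = 0 := by
  show multR v ((2 * (j : ℝ) + 1) / 2) = 0
  rw [multR_card, Finset.card_eq_zero, Finset.filter_eq_empty_iff]
  intro i _
  obtain ⟨j', hj', he⟩ := hcov i
  rw [he]
  intro hcontra
  have := wval_inj hcontra
  omega

private lemma card_decomp {n : ℕ} {v : Fin n → ℝ} {M : ℕ} (hcov : Covers M v) :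
    ∑ j ∈ range M, mhalf v j = n := by
  choose key hk1 hk2 using hcov
  have hre : ∀ j, mhalf v j = (Finset.univ.filter (fun i => v i = (2 * (j : ℝ) + 1) / 2)).card :=
    fun j => multR_card v _
  simp_rw [hre]
  have h := Finset.card_eq_sum_card_fiberwise (s := (univ : Finset (Fin n)))
      (t := range M) (f := key) (fun i _ => mem_range.mpr (hk1 i))
  rw [card_univ, Fintype.card_fin] at h
  refine Eq.trans ?_ h.symm
  refine Finset.sum_congr rfl fun j hj => ?_
  congr 1
  ext i
  simp only [mem_filter, mem_univ, true_and]
  constructor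
  · intro h'
    exact wval_inj ((hk2 i).symm.trans h')
  · intro h'
    rw [← h']
    exact hk2 i

private lemma sq_decomp {n : ℕ} {v : Fin n → ℝ} {M : ℕ} (hcov : Covers M v) :
    ∑ i, (v i) ^ 2 = ∑ j ∈ range M, (mhalf v j : ℝ) * ((2 * (j : ℝ) + 1) / 2) ^ 2 := by
  choose key hk1 hk2 using hcov
  rw [← Finset.sum_fiberwise_of_maps_to (g := key) (t := range M)
      (fun i _ => mem_range.mpr (hk1 i)) (fun i => (v i) ^ 2)]
  refine Finset.sum_congr rfl fun j hj => ?_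
  have hset : (univ.filter (fun i => key i = j))
      = (univ.filter (fun i => v i = (2 * (j : ℝ) + 1) / 2)) := by
    ext i
    simp only [mem_filter, mem_univ, true_and]
    constructor
    · intro h'
      rw [← h']
      exact hk2 i
    · intro h'
      exact wval_inj ((hk2 i).symm.trans h')
  rw [hset]
  have hconst : ∀ i ∈ univ.filter (fun i => v i = (2 * (j : ℝ) + 1) / 2),
      (v i) ^ 2 = ((2 * (j : ℝ) + 1) / 2) ^ 2 := fun i hi => by
    rw [(mem_filter.mp hi).2]
  rw [Finset.sum_congr rfl hconst, Finset.sum_const, nsmul_eq_mul]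
  have hc2 : mhalf v j = (univ.filter (fun i => v i = (2 * (j : ℝ) + 1) / 2)).card :=
    multR_card v _
  rw [hc2]

private lemma mhalf_eq_p {n : ℕ} {v : Fin n → ℝ} {p : ℕ → ℕ} (hvh : IsVHalf n p v) (j : ℕ) :
    mhalf v j = p j := by
  have h := hvh.2.2 (j + 1) (by omega)
  rw [wval_succ] at h
  simpa [mhalf] using h

private lemma part_le {n : ℕ} {p : ℕ → ℕ} (hp : IsPartition n p) (i : ℕ) : p i ≤ n := by
  by_cases h : i < n
  · calc p i ≤ ∑ x ∈ range n, p x :=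
        Finset.single_le_sum (fun _ _ => Nat.zero_le _) (mem_range.mpr h)
    _ = n := hp.2.2
  · rw [hp.2.1 i (by omega)]
    omega

private lemma mult_link {n : ℕ} {v : Fin n → ℝ} {q : ℕ → ℕ} (hq : IsPHalf n v q)
    {M : ℕ} (hcov : Covers M v) {c : ℕ} (hc : 1 ≤ c) :
    mult n q c = ((range M).filter (fun j => mhalf v j = c)).card := by
  rw [hq.2 c hc]
  have h1 : {k : ℕ | 1 ≤ k ∧ multR v ((2 * (k : ℝ) - 1) / 2) = c}
      = (fun j => j + 1) '' {j : ℕ | mhalf v j = c} := by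
    ext k
    simp only [Set.mem_setOf_eq, Set.mem_image]
    constructor
    · rintro ⟨hk, hkc⟩
      refine ⟨k - 1, ?_, by omega⟩
      show multR v ((2 * ((k - 1 : ℕ) : ℝ) + 1) / 2) = c
      rw [← wval_succ, (by omega : k - 1 + 1 = k)]
      exact hkc
    · rintro ⟨j, hj, rfl⟩
      refine ⟨by omega, ?_⟩
      rw [wval_succ]
      exact hj
  rw [h1, Set.ncard_image_of_injective _
      (fun a b h => by simpa using h : Function.Injective (fun j : ℕ => j + 1))]
  have h2 : {j : ℕ | mhalf v j = c} = ↑((range M).filter (fun j => mhalf v j = c)) := by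
    ext j
    simp only [Set.mem_setOf_eq, coe_filter, mem_range]
    constructor
    · intro h
      refine ⟨?_, h⟩
      by_contra hj
      rw [mhalf_vanish hcov (by omega)] at h
      omega
    · exact fun h => h.2
  rw [h2, Set.ncard_coe_finset]

private lemma psum_eq {n : ℕ} {v : Fin n → ℝ} {q : ℕ → ℕ} {M : ℕ}
    (hq : IsPHalf n v q) (hcov : Covers M v) (j : ℕ) :
    ∑ i ∈ range j, q i
      = ∑ c ∈ Icc 1 n, min j (((range M).filter (fun k => c ≤ mhalf v k)).card) := by
  rw [layer_cake q j n (fun i _ => part_le hq.1 i)]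
  refine Finset.sum_congr rfl fun c hc => ?_
  rw [mem_Icc] at hc
  rw [filter_ge_eq q hq.1.1 n hq.1.2.1 c hc.1 j, card_range]
  congr 1
  rw [count_decomp q (range n) n c (fun i _ => part_le hq.1 i),
      count_decomp (mhalf v) (range M) n c (fun k _ => mhalf_le v k)]
  refine Finset.sum_congr rfl fun d hd => ?_
  rw [mem_Icc] at hd
  exact mult_link hq hcov (show 1 ≤ d by omega)

private lemma msum_le {n : ℕ} {v : Fin n → ℝ} {M : ℕ} (hcov : Covers M v) (j : ℕ) :
    ∑ k ∈ range j, mhalf v k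
      ≤ ∑ c ∈ Icc 1 n, min j (((range M).filter (fun k => c ≤ mhalf v k)).card) := by
  rw [layer_cake (mhalf v) j n (fun k _ => mhalf_le v k)]
  refine Finset.sum_le_sum fun c hc => ?_
  rw [mem_Icc] at hc
  refine le_min ?_ ?_
  · exact le_trans (Finset.card_filter_le _ _) (le_of_eq (card_range j))
  · apply Finset.card_le_card
    intro x hx
    rw [mem_filter] at hx ⊢
    rw [mem_range] at hx
    refine ⟨mem_range.mpr ?_, hx.2⟩
    by_contra hxM
    have h0 := mhalf_vanish hcov (show M ≤ x by omega)
    have h2 := hx.2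
    omega

private lemma msum_eq {n : ℕ} {v : Fin n → ℝ} {p : ℕ → ℕ} {M : ℕ}
    (hp : IsPartition n p) (hvh : IsVHalf n p v) (hcov : Covers M v) (j : ℕ) :
    ∑ k ∈ range j, mhalf v k
      = ∑ c ∈ Icc 1 n, min j (((range M).filter (fun k => c ≤ mhalf v k)).card) := by
  have hmp : mhalf v = p := funext (mhalf_eq_p hvh)
  have hanti : Antitone (mhalf v) := hmp ▸ hp.1
  have hvan : ∀ i, M ≤ i → mhalf v i = 0 := fun i hi => mhalf_vanish hcov hi
  rw [layer_cake (mhalf v) j n (fun k _ => mhalf_le v k)]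
  refine Finset.sum_congr rfl fun c hc => ?_
  rw [mem_Icc] at hc
  rw [filter_ge_eq (mhalf v) hanti M hvan c hc.1 j, card_range]

/-- Let `v, v′` be weakly decreasing `n`-tuples with all entries of
the form `(2k-1)/2` for `k ≥ 1`.  If `v` is `(1/2)ℤ`-triangular (i.e. it lies in
the image of `v_{1/2}`) and `|v′| < |v|`, then `p_{1/2}(v′) ≰ p_{1/2}(v)`
in the dominance order. -/
theorem statement8 (n : ℕ) (hn : 1 ≤ n)
    (v v' : Fin n → ℝ) (hv : Antitone v) (hv' : Antitone v')
    (hvmem : ∀ i, ∃ k : ℕ, 1 ≤ k ∧ v i = (2 * (k : ℝ) - 1) / 2)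
    (hvmem' : ∀ i, ∃ k : ℕ, 1 ≤ k ∧ v' i = (2 * (k : ℝ) - 1) / 2)
    (htri : ∃ p : ℕ → ℕ, IsPartition n p ∧ IsVHalf n p v)
    (hlt : enormR v' < enormR v)
    (q q' : ℕ → ℕ) (hq : IsPHalf n v q) (hq' : IsPHalf n v' q') :
    ¬ Dominates q q' := by
  intro hdom
  obtain ⟨p, hp, hvh⟩ := htri
  obtain ⟨M1, hM1⟩ := exists_cover v hvmem
  obtain ⟨M2, hM2⟩ := exists_cover v' hvmem'
  have hcov : Covers (M1 ⊔ M2) v := covers_mono le_sup_left hM1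
  have hcov' : Covers (M1 ⊔ M2) v' := covers_mono le_sup_right hM2
  set M := M1 ⊔ M2 with hMdef
  have hchain : ∀ j, ∑ k ∈ range j, mhalf v' k ≤ ∑ k ∈ range j, mhalf v k := by
    intro j
    calc ∑ k ∈ range j, mhalf v' k
        ≤ ∑ c ∈ Icc 1 n, min j (((range M).filter (fun k => c ≤ mhalf v' k)).card) :=
          msum_le hcov' j
      _ = ∑ i ∈ range j, q' i := (psum_eq hq' hcov' j).symm
      _ ≤ ∑ i ∈ range j, q i := hdom j
      _ = ∑ c ∈ Icc 1 n, min j (((range M).filter (fun k => c ≤ mhalf v k)).card) :=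
          psum_eq hq hcov j
      _ = ∑ k ∈ range j, mhalf v k := (msum_eq hp hvh hcov j).symm
  have hcard : ∑ k ∈ range M, mhalf v k = ∑ k ∈ range M, mhalf v' k := by
    rw [card_decomp hcov, card_decomp hcov']
  have habel : ∑ k ∈ range M, (mhalf v k : ℝ) * ((2 * (k : ℝ) + 1) / 2) ^ 2
      ≤ ∑ k ∈ range M, (mhalf v' k : ℝ) * ((2 * (k : ℝ) + 1) / 2) ^ 2 := by
    apply abel_le M (fun k => ((2 * (k : ℝ) + 1) / 2) ^ 2)
        (fun k => (mhalf v k : ℝ)) (fun k => (mhalf v' k : ℝ))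
    · intro i hi
      have h0 : (0:ℝ) ≤ (i:ℝ) := Nat.cast_nonneg i
      push_cast
      nlinarith
    · intro j hj
      exact_mod_cast hchain j
    · exact_mod_cast hcard
  have hsq : ∑ i, (v i) ^ 2 ≤ ∑ i, (v' i) ^ 2 := by
    rw [sq_decomp hcov, sq_decomp hcov']
    exact habel
  have hle : enormR v ≤ enormR v' := Real.sqrt_le_sqrt hsq
  linarith
end
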